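/- Let E be a finite set of vectors in ℝ^d with the partial orthogonality independence model, and suppose M₁ and M₂ are two Markov boundaries of a vector v ∈ E. Then the orthogonal projections of v onto span(M₁) and span(M₂) coincide: proj_{M₁}[v] = proj_{M₂}[v]. -/

import Mathlib

noncomputable def resid {E : Type*} [NormedAddCommGroup E] [InnerProductSpace ℝ E]
    [FiniteDimensional ℝ E] (C : Set E) (v : E) : E :=
  v - (Submodule.orthogonalProjectionOnto (Submodule.span ℝ C) v : E)

/-- `M` is a Markov blanket of `v` in `E` under partial orthogonality:
`M ⊆ E \ {v}` and the residuals of `v` and of every `u ∈ E \ ({v} ∪ M)`, after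
orthogonal projection onto the span of `M`, are orthogonal. -/
def MarkovBlanket {d : ℕ} [DecidableEq (EuclideanSpace ℝ (Fin d))]
    (E : Finset (EuclideanSpace ℝ (Fin d))) (v : EuclideanSpace ℝ (Fin d))
    (M : Finset (EuclideanSpace ℝ (Fin d))) : Prop :=
  M ⊆ E.erase v ∧ ∀ u ∈ E \ insert v M,
    inner ℝ (resid (M : Set (EuclideanSpace ℝ (Fin d))) v)
      (resid (M : Set (EuclideanSpace ℝ (Fin d))) u) = (0 : ℝ)

/-- A Markov boundary is a minimal Markov blanket. -/
def MarkovBoundary {d : ℕ} [DecidableEq (EuclideanSpace ℝ (Fin d))]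
    (E : Finset (EuclideanSpace ℝ (Fin d))) (v : EuclideanSpace ℝ (Fin d))
    (M : Finset (EuclideanSpace ℝ (Fin d))) : Prop :=
  MarkovBlanket E v M ∧ ∀ M' : Finset (EuclideanSpace ℝ (Fin d)),
    MarkovBlanket E v M' → ¬ M' ⊂ M

/-- Any Markov blanket gives the same projection as the full set `E.erase v`. -/
lemma blanket_proj {d : ℕ} [DecidableEq (EuclideanSpace ℝ (Fin d))]
    (E : Finset (EuclideanSpace ℝ (Fin d))) (v : EuclideanSpace ℝ (Fin d))
    (M : Finset (EuclideanSpace ℝ (Fin d))) (h : MarkovBlanket E v M) :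
    (Submodule.orthogonalProjectionOnto (Submodule.span ℝ ((E.erase v : Finset _) : Set (EuclideanSpace ℝ (Fin d)))) v
      : EuclideanSpace ℝ (Fin d))
    = (Submodule.orthogonalProjectionOnto (Submodule.span ℝ (M : Set (EuclideanSpace ℝ (Fin d)))) v
      : EuclideanSpace ℝ (Fin d)) := by
  obtain ⟨hsub, horth⟩ := h
  set KM := Submodule.span ℝ (M : Set (EuclideanSpace ℝ (Fin d))) with hKM
  set K := Submodule.span ℝ ((E.erase v : Finset _) : Set (EuclideanSpace ℝ (Fin d))) with hK
  have hle : KM ≤ K := Submodule.span_mono (by exact_mod_cast hsub)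
  apply Submodule.eq_starProjection_of_mem_of_inner_eq_zero
  · exact hle (Submodule.orthogonalProjectionOnto KM v).2
  · -- residual of v w.r.t. M is orthogonal to every generator of K
    have hres : v - (Submodule.orthogonalProjectionOnto KM v : EuclideanSpace ℝ (Fin d)) ∈ KMᗮ :=
      Submodule.sub_starProjection_mem_orthogonal v
    intro w hw
    -- reduce to generators
    refine Submodule.span_induction (p := fun w _ =>
        (inner ℝ (v - (Submodule.orthogonalProjectionOnto KM v : EuclideanSpace ℝ (Fin d))) w : ℝ) = 0)
      ?_ ?_ ?_ ?_ hw
    · intro u hu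
      have hu' : u ∈ E.erase v := by exact_mod_cast hu
      by_cases hM : u ∈ M
      · exact (Submodule.mem_orthogonal' KM _).mp hres u (Submodule.subset_span hM)
      · have huE : u ∈ E \ insert v M := by
          simp only [Finset.mem_sdiff, Finset.mem_insert]
          exact ⟨Finset.mem_of_mem_erase hu', by
            push_neg
            exact ⟨Finset.ne_of_mem_erase hu', hM⟩⟩
        have h0 := horth u huE
        unfold resid at h0
        have hproj : (inner ℝ (v - (Submodule.orthogonalProjectionOnto KM v : EuclideanSpace ℝ (Fin d)))
            ((Submodule.orthogonalProjectionOnto KM u : EuclideanSpace ℝ (Fin d))) : ℝ) = 0 :=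
          (Submodule.mem_orthogonal' KM _).mp hres _ (Submodule.orthogonalProjectionOnto KM u).2
        have := inner_sub_right (𝕜 := ℝ)
          (x := v - (Submodule.orthogonalProjectionOnto KM v : EuclideanSpace ℝ (Fin d)))
          (y := u) (z := (Submodule.orthogonalProjectionOnto KM u : EuclideanSpace ℝ (Fin d)))
        rw [this, hproj, sub_zero] at h0
        exact h0
    · simp
    · intro x y _ _ hx hy
      rw [inner_add_right, hx, hy, add_zero]
    · intro a x _ hx
      rw [real_inner_smul_right, hx, mul_zero]

/-- Any two Markov boundaries of a vector under partial orthogonality give the same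
orthogonal projection of that vector. -/
theorem markov_boundaries_same_projection {d : ℕ}
    [DecidableEq (EuclideanSpace ℝ (Fin d))]
    (E : Finset (EuclideanSpace ℝ (Fin d))) (v : EuclideanSpace ℝ (Fin d)) (hv : v ∈ E)
    (M₁ M₂ : Finset (EuclideanSpace ℝ (Fin d)))
    (h₁ : MarkovBoundary E v M₁) (h₂ : MarkovBoundary E v M₂) :
    (Submodule.orthogonalProjectionOnto (Submodule.span ℝ (M₁ : Set (EuclideanSpace ℝ (Fin d)))) v
      : EuclideanSpace ℝ (Fin d))
    = (Submodule.orthogonalProjectionOnto (Submodule.span ℝ (M₂ : Set (EuclideanSpace ℝ (Fin d)))) v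
      : EuclideanSpace ℝ (Fin d)) := by
  rw [← blanket_proj E v M₁ h₁.1, ← blanket_proj E v M₂ h₂.1]
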